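/- arXiv:2001.10941 — 2 statements merged into one kernel-verified Lean document; each statement's English description precedes it below -/
import Mathlib

section
/- Let X be a pre-Riesz space and let V, W ⊆ X be vector subspaces each of which has generating cone (i.e. V = V₊ − V₊ and W = W₊ − W₊, where V₊ = V ∩ X₊ and W₊ = W ∩ X₊). If every element of V₊ is disjoint to every element of W₊, then every element of V is disjoint to every element of W. -/
open Pointwise

variable {X : Type*} [AddCommGroup X] [PartialOrder X] [IsOrderedAddMonoid X] [Module ℝ X]
  [PosSMulStrictMono ℝ X]

/-- Two elements of an ordered vector space are disjoint if the sets `{x+y, -x-y}` and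
`{x-y, y-x}` have the same set of upper bounds. -/
def UDisjoint (x y : X) : Prop :=
  upperBounds ({x + y, -x - y} : Set X) = upperBounds ({x - y, y - x} : Set X)

/-- The disjoint complement `S^⊥` of a set `S`. -/
def dComp (S : Set X) : Set X := {x : X | ∀ s ∈ S, UDisjoint x s}

/-- A band: a set equal to its double disjoint complement. -/
def IsBand (B : Set X) : Prop := B = dComp (dComp B)

/-- A projection band: a band `B` with `B ∩ B^⊥ = {0}` and `B + B^⊥ = X`. -/
def IsProjBand (B : Set X) : Prop :=
  IsBand B ∧ B ∩ dComp B = {0} ∧ ∀ x : X, ∃ b ∈ B, ∃ c ∈ dComp B, x = b + c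

/-- A positive linear operator. -/
def IsPosMap (T : X →ₗ[ℝ] X) : Prop := ∀ x : X, 0 ≤ x → 0 ≤ T x

/-- A band projection: a linear projection whose range is a projection band and whose
kernel is the disjoint complement of the range. -/
def IsBandProj (P : X →ₗ[ℝ] X) : Prop :=
  P ∘ₗ P = P ∧ IsProjBand (Set.range ⇑P) ∧ (LinearMap.ker P : Set X) = dComp (Set.range ⇑P)

/-- A pre-Riesz space: for every nonempty finite `A ⊆ X` and every `x`, if the upper bounds
of `x + A` are contained in the upper bounds of `A`, then `x ≥ 0`. -/
def IsPreRiesz (X : Type*) [AddCommGroup X] [PartialOrder X] [IsOrderedAddMonoid X] [Module ℝ X]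
    [PosSMulStrictMono ℝ X] : Prop :=
  ∀ (A : Set X) (x : X), A.Finite → A.Nonempty →
    upperBounds ((x + ·) '' A) ⊆ upperBounds A → 0 ≤ x

set_option linter.unusedSectionVars false in
lemma UDisjoint.symm' {x y : X} (h : UDisjoint x y) : UDisjoint y x := by
  unfold UDisjoint at *
  have e1 : y + x = x + y := add_comm y x
  have e2 : -y - x = -x - y := by abel
  rw [e1, e2, h, Set.pair_comm]

set_option linter.unusedSectionVars false in
lemma UDisjoint.add_le {p q t : X} (h : UDisjoint p q) (h1 : p - q ≤ t) (h2 : q - p ≤ t) :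
    p + q ≤ t := by
  have ht : t ∈ upperBounds ({p - q, q - p} : Set X) := by
    intro s hs
    rcases hs with rfl | hs
    · exact h1
    · rw [Set.mem_singleton_iff] at hs; subst hs; exact h2
  rw [← h] at ht
  exact ht (Set.mem_insert _ _)

set_option linter.unusedSectionVars false in
lemma key_disj {a b c d t : X} (had : UDisjoint a d) (hb : 0 ≤ b) (hc : 0 ≤ c)
    (h1 : a - b + c - d ≤ t) (h2 : b - a + d - c ≤ t) : a - b - c + d ≤ t := by
  have e1 : a - d ≤ t + (b + c) := by
    calc a - d = (a - b + c - d) + (b + -c) := by abel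
      _ ≤ t + (b + c) := add_le_add h1 (add_le_add_right (neg_le_self hc) b)
  have e2 : d - a ≤ t + (b + c) := by
    calc d - a = (b - a + d - c) + (-b + c) := by abel
      _ ≤ t + (b + c) := add_le_add h2 (add_le_add_left (neg_le_self hb) c)
  have e3 : a + d ≤ t + (b + c) := had.add_le e1 e2
  calc a - b - c + d = (a + d) + -(b + c) := by abel
    _ ≤ (t + (b + c)) + -(b + c) := add_le_add_left e3 _
    _ = t := by abel

/-- If `V` and `W` are subspaces with generating cone and `V₊ ⊥ W₊`, then `V ⊥ W`. -/
theorem stmt_0 (hX : IsPreRiesz X) (V W : Submodule ℝ X)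
    (hV : ∀ v ∈ V, ∃ a ∈ V, ∃ b ∈ V, 0 ≤ a ∧ 0 ≤ b ∧ v = a - b)
    (hW : ∀ w ∈ W, ∃ a ∈ W, ∃ b ∈ W, 0 ≤ a ∧ 0 ≤ b ∧ w = a - b)
    (h : ∀ v ∈ V, 0 ≤ v → ∀ w ∈ W, 0 ≤ w → UDisjoint v w) :
    ∀ v ∈ V, ∀ w ∈ W, UDisjoint v w := by
  intro v hv w hw
  obtain ⟨a, haV, b, hbV, ha, hb, rfl⟩ := hV v hv
  obtain ⟨c, hcW, d, hdW, hc, hd, rfl⟩ := hW w hw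
  have had := h a haV ha d hdW hd
  have hcb := (h b hbV hb c hcW hc).symm'
  have hac := h a haV ha c hcW hc
  have hbd := h b hbV hb d hdW hd
  unfold UDisjoint
  ext t
  simp only [upperBounds, Set.mem_insert_iff, Set.mem_singleton_iff, Set.mem_setOf_eq]
  constructor
  · intro ht
    have h1 : a - b + (c - d) ≤ t := ht (Or.inl rfl)
    have h2 : -(a - b) - (c - d) ≤ t := ht (Or.inr rfl)
    have h1' : a - b + c - d ≤ t := by
      rw [show a - b + c - d = a - b + (c - d) from by abel]; exact h1
    have h2' : b - a + d - c ≤ t := by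
      rw [show b - a + d - c = -(a - b) - (c - d) from by abel]; exact h2
    rintro s (rfl | rfl)
    · rw [show a - b - (c - d) = a - b - c + d from by abel]
      exact key_disj had hb hc h1' h2'
    · rw [show c - d - (a - b) = c - d - a + b from by abel]
      exact key_disj hcb hd ha (by rw [show c - d + a - b = a - b + c - d from by abel]; exact h1')
        (by rw [show d - c + b - a = b - a + d - c from by abel]; exact h2')
  · intro ht
    have h1 : a - b - (c - d) ≤ t := ht (Or.inl rfl)
    have h2 : c - d - (a - b) ≤ t := ht (Or.inr rfl)
    have h1' : a - b + d - c ≤ t := by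
      rw [show a - b + d - c = a - b - (c - d) from by abel]; exact h1
    have h2' : b - a + c - d ≤ t := by
      rw [show b - a + c - d = c - d - (a - b) from by abel]; exact h2
    rintro s (rfl | rfl)
    · rw [show a - b + (c - d) = a - b - d + c from by abel]
      exact key_disj hac hb hd h1' h2'
    · rw [show -(a - b) - (c - d) = b - a - c + d from by abel]
      exact key_disj hbd ha hc h2' h1'
end

section
/- Let X be a pre-Riesz space, let P₁, …, P_n be band projections on X and let x ∈ X₊. Then: (a) if z ∈ X satisfies z ≤ P₁x, …, z ≤ P_n x, then z ≤ P₁P₂⋯P_n x; and (b) P₁P₂⋯P_n x is the infimum of the set {P₁x, …, P_n x} in X. -/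
open Pointwise

variable {X : Type*} [AddCommGroup X] [PartialOrder X] [IsOrderedAddMonoid X] [Module ℝ X]
  [PosSMulStrictMono ℝ X]

lemma halfpos {y : X} (h : 0 ≤ y + y) : 0 ≤ y := by
  have h2 : (0:X) ≤ (2:ℝ) • y := by rwa [two_smul]
  have h3 := smul_nonneg (by norm_num : (0:ℝ) ≤ 1/2) h2
  rwa [smul_smul, show (1/2 : ℝ) * 2 = 1 by norm_num, one_smul] at h3

omit [Module ℝ X] [PosSMulStrictMono ℝ X] in
lemma mem_ub_pair {u p q : X} (hp : p ≤ u) (hq : q ≤ u) :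
    u ∈ upperBounds ({p, q} : Set X) := by
  intro w hw
  rcases hw with rfl | hw
  · exact hp
  · simpa using hw ▸ hq

lemma disj_pos {c d : X} (hcd : UDisjoint c d) (h : 0 ≤ c + d) : 0 ≤ c ∧ 0 ≤ d := by
  have hmem : c + d ∈ upperBounds ({c + d, -c - d} : Set X) := by
    refine mem_ub_pair le_rfl ?_
    rw [← sub_nonneg]
    have := add_nonneg h h
    convert this using 1; abel
  rw [hcd] at hmem
  have h1 : c - d ≤ c + d := hmem (by simp)
  have h2 : d - c ≤ c + d := hmem (by simp [Set.mem_insert_iff])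
  rw [← sub_nonneg] at h1 h2
  constructor
  · refine halfpos ?_
    convert h2 using 1; abel
  · refine halfpos ?_
    convert h1 using 1; abel

lemma key {c d a z : X} (hcd : UDisjoint c d) (ha : 0 ≤ a) (hzd : z ≤ d)
    (hzac : z ≤ a + c) : z ≤ a := by
  set v := a + a + c + d - z - z with hv
  rw [← sub_nonneg] at hzd hzac
  have hmem : v ∈ upperBounds ({c - d, d - c} : Set X) := by
    apply mem_ub_pair <;> rw [← sub_nonneg]
    · have := add_nonneg (add_nonneg ha ha) (add_nonneg hzd hzd)
      convert this using 1; rw [hv]; abel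
    · have := add_nonneg hzac hzac
      convert this using 1; rw [hv]; abel
  rw [← hcd] at hmem
  have h1 : c + d ≤ v := hmem (by simp)
  rw [← sub_nonneg] at h1
  rw [← sub_nonneg]
  refine halfpos ?_
  convert h1 using 1; rw [hv]; abel

lemma bandproj_pos {P : X →ₗ[ℝ] X}
    (hPP : P ∘ₗ P = P) (hdec : ∀ x : X, ∃ b ∈ Set.range ⇑P, ∃ c ∈ dComp (Set.range ⇑P), x = b + c)
    (hker : (LinearMap.ker P : Set X) = dComp (Set.range ⇑P))
    {x : X} (hx : 0 ≤ x) : 0 ≤ P x ∧ P x ≤ x := by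
  obtain ⟨b, hb, c, hc, hxbc⟩ := hdec x
  have hPc : P c = 0 := by
    have : c ∈ (LinearMap.ker P : Set X) := hker ▸ hc
    simpa using this
  have hPb : P b = b := by
    obtain ⟨y, rfl⟩ := hb
    have := congrArg (fun f : X →ₗ[ℝ] X => f y) hPP
    simpa using this
  have hPx : P x = b := by
    rw [hxbc, map_add, hPb, hPc, add_zero]
  have hdisj : UDisjoint c b := hc b hb
  have h0 : 0 ≤ c + b := by rw [add_comm]; rwa [← hxbc]
  obtain ⟨hc0, hb0⟩ := disj_pos hdisj h0
  refine ⟨hPx ▸ hb0, ?_⟩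
  rw [hPx, hxbc]
  simpa using hc0

lemma bandproj_pos' {P : X →ₗ[ℝ] X} (hP : IsBandProj P) {x : X} (hx : 0 ≤ x) :
    0 ≤ P x ∧ P x ≤ x :=
  bandproj_pos hP.1 hP.2.1.2.2 hP.2.2 hx

lemma bandproj_mono {P : X →ₗ[ℝ] X} (hP : IsBandProj P) {z w : X} (h : z ≤ w) :
    P z ≤ P w := by
  have h0 : 0 ≤ P (w - z) := (bandproj_pos' hP (sub_nonneg.mpr h)).1
  rw [map_sub, sub_nonneg] at h0
  exact h0

lemma list_prod_props (L : List (X →ₗ[ℝ] X)) (hL : ∀ Q ∈ L, IsBandProj Q)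
    {x : X} (hx : 0 ≤ x) :
    0 ≤ L.prod x ∧ L.prod x ≤ x ∧ (∀ Q ∈ L, L.prod x ≤ Q x) ∧
      ∀ z, z ≤ x → (∀ Q ∈ L, z ≤ Q x) → z ≤ L.prod x := by
  induction L with
  | nil =>
    refine ⟨by simpa using hx, by simp, by simp, fun z hz _ => by simpa using hz⟩
  | cons Q T ih =>
    have hQ : IsBandProj Q := hL Q (List.mem_cons_self)
    obtain ⟨hy0, hyx, hlb, hglb⟩ := ih (fun R hR => hL R (List.mem_cons_of_mem Q hR))
    set y := T.prod x with hy
    have happ : (Q :: T).prod x = Q y := by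
      rw [List.prod_cons]; rfl
    obtain ⟨hQy0, hQyy⟩ := bandproj_pos' hQ hy0
    rw [happ]
    refine ⟨hQy0, hQyy.trans hyx, ?_, ?_⟩
    · intro R hR
      rcases List.mem_cons.mp hR with rfl | hR
      · exact bandproj_mono hQ hyx
      · exact hQyy.trans (hlb R hR)
    · intro z hzx hz
      have hzy : z ≤ y := hglb z hzx (fun R hR => hz R (List.mem_cons_of_mem Q hR))
      have hcker : Q (y - Q y) = 0 := by
        rw [map_sub]
        have := congrArg (fun f : X →ₗ[ℝ] X => f y) hQ.1
        simp only [LinearMap.comp_apply] at this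
        rw [this, sub_self]
      have hcmem : y - Q y ∈ dComp (Set.range ⇑Q) := by
        rw [← hQ.2.2]
        simpa using hcker
      have hdisj : UDisjoint (y - Q y) (Q x) := hcmem (Q x) ⟨x, rfl⟩
      refine key hdisj hQy0 (hz Q (List.mem_cons_self)) ?_
      rw [add_sub_cancel]
      exact hzy


/-- For band projections `P₁, …, Pₙ` and `x ∈ X₊`: (a) any common lower bound of the
`Pᵢ x` lies below `P₁ ⋯ Pₙ x`; (b) `P₁ ⋯ Pₙ x` is the infimum of `{P₁ x, …, Pₙ x}`. -/
theorem stmt_9 (hX : IsPreRiesz X) {n : ℕ} (hn : 0 < n) (P : Fin n → (X →ₗ[ℝ] X))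
    (hP : ∀ i, IsBandProj (P i)) (x : X) (hx : 0 ≤ x) :
    (∀ z : X, (∀ i, z ≤ P i x) → z ≤ (List.ofFn P).prod x) ∧
    IsGLB (Set.range fun i => P i x) ((List.ofFn P).prod x) := by
  have hL : ∀ Q ∈ List.ofFn P, IsBandProj Q := by
    intro Q hQ
    obtain ⟨i, rfl⟩ := (List.mem_ofFn).mp hQ
    exact hP i
  obtain ⟨h0, hxle, hlb, hglb⟩ := list_prod_props (List.ofFn P) hL hx
  have hzx : ∀ z : X, (∀ i, z ≤ P i x) → z ≤ x := fun z hz =>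
    (hz ⟨0, hn⟩).trans (bandproj_pos' (hP ⟨0, hn⟩) hx).2
  have main : ∀ z : X, (∀ i, z ≤ P i x) → z ≤ (List.ofFn P).prod x := by
    intro z hz
    refine hglb z (hzx z hz) ?_
    intro Q hQ
    obtain ⟨i, rfl⟩ := (List.mem_ofFn).mp hQ
    exact hz i
  refine ⟨main, ?_, ?_⟩
  · rintro w ⟨i, rfl⟩
    exact hlb (P i) ((List.mem_ofFn).mpr ⟨i, rfl⟩)
  · intro z hz
    exact main z fun i => hz ⟨i, rfl⟩
end
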